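/- arXiv:2206.11702 — 3 statements merged into one kernel-verified Lean document; each statement's English description precedes it below -/
import Mathlib

section
/- Let V be a real inner product space, and let A, B be linear endomorphisms of V such that ⟨A(u), B(v)⟩ = 0 for all u, v ∈ V and (A + B)(v) = v for all v ∈ Im A ⊕ Im B. Then for every α ∈ [0,1] and every v ∈ Im A ⊕ Im B: ⟨(A − αB)(v), (A − αB)(v)⟩ − ⟨v, v⟩ = −((1−α)/(1+α)) ⟨A(v) − αB(v) − v, A(v) − αB(v) − v⟩. -/
open RealInnerProductSpace

/-!
STATEMENT 8: If A, B are endomorphisms of a real inner product space V with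
⟨A u, B v⟩ = 0 for all u, v and (A + B) v = v for v ∈ Im A ⊕ Im B, then for
α ∈ [0,1] and v ∈ Im A ⊕ Im B:
⟨(A−αB)v, (A−αB)v⟩ − ⟨v,v⟩ = −((1−α)/(1+α)) ⟨(A−αB)v − v, (A−αB)v − v⟩.
-/
theorem impulsive_energy_identity
    {V : Type*} [NormedAddCommGroup V] [InnerProductSpace ℝ V]
    (A B : V →ₗ[ℝ] V)
    (horth : ∀ u v : V, ⟪A u, B v⟫ = 0)
    (hres : ∀ v ∈ LinearMap.range A ⊔ LinearMap.range B, A v + B v = v)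
    (α : ℝ) (hα : α ∈ Set.Icc (0:ℝ) 1)
    (v : V) (hv : v ∈ LinearMap.range A ⊔ LinearMap.range B) :
    ⟪A v - α • B v, A v - α • B v⟫ - ⟪v, v⟫
      = -((1 - α) / (1 + α)) * ⟪A v - α • B v - v, A v - α • B v - v⟫ := by
  have hab : A v + B v = v := hres v hv
  have h1 : ⟪A v, B v⟫ = 0 := horth v v
  have h2 : ⟪B v, A v⟫ = 0 := by rw [real_inner_comm]; exact h1
  have hne : (1 : ℝ) + α ≠ 0 := by nlinarith [hα.1]
  obtain ⟨a, b, ha, hb⟩ : ∃ a b : V, a = A v ∧ b = B v := ⟨A v, B v, rfl, rfl⟩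
  rw [← ha, ← hb] at hab h1 h2 ⊢
  rw [← hab]
  simp only [inner_sub_left, inner_sub_right, inner_add_left, inner_add_right,
    real_inner_smul_left, real_inner_smul_right, h1, h2]
  field_simp
  ring
end

section
/- Carnot's theorem for impulsive collisions: Let (V, ⟨·,·⟩) be a real inner product space, P and Q orthogonal projectors onto complementary orthogonal subspaces (P + Q = Id, PQ = QP = 0, P, Q self-adjoint idempotents). For v ∈ V, α ∈ [0,1], set v⁺ = (P − αQ)(v). Define T(w) = ½⟨w, w⟩. Then T(v⁺) − T(v) = −((1−α)/(1+α)) T(v⁺ − v). -/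
open RealInnerProductSpace

/-!
STATEMENT 9 (Carnot's theorem for impulsive collisions): V a real inner
product space, P, Q complementary orthogonal projectors (self-adjoint
idempotents with P + Q = Id, PQ = QP = 0), α ∈ [0,1] the restitution
coefficient, v⁺ = P v − α Q v, T(w) = ½⟨w,w⟩.  Then
T(v⁺) − T(v) = −((1−α)/(1+α)) T(v⁺ − v).
-/
theorem carnot_theorem
    {V : Type*} [NormedAddCommGroup V] [InnerProductSpace ℝ V]
    (P Q : V →ₗ[ℝ] V)
    (hPsa : ∀ x y : V, ⟪P x, y⟫ = ⟪x, P y⟫)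
    (hQsa : ∀ x y : V, ⟪Q x, y⟫ = ⟪x, Q y⟫)
    (hPidem : P ∘ₗ P = P) (hQidem : Q ∘ₗ Q = Q)
    (hPQ : P ∘ₗ Q = 0) (hQP : Q ∘ₗ P = 0)
    (hsum : P + Q = LinearMap.id)
    (α : ℝ) (hα : α ∈ Set.Icc (0:ℝ) 1) (v : V) :
    (1/2 : ℝ) * ⟪P v - α • Q v, P v - α • Q v⟫ - (1/2 : ℝ) * ⟪v, v⟫
      = -((1 - α) / (1 + α))
          * ((1/2 : ℝ) * ⟪(P v - α • Q v) - v, (P v - α • Q v) - v⟫) := by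
  have hv : v = P v + Q v := by
    have := congrArg (fun f => f v) hsum
    simpa using this.symm
  have hcross : ⟪P v, Q v⟫ = (0 : ℝ) := by
    have : P (Q v) = 0 := by
      have := congrArg (fun f => f v) hPQ
      simpa using this
    rw [hPsa, this, inner_zero_right]
  have hcross' : ⟪Q v, P v⟫ = (0 : ℝ) := by
    rw [real_inner_comm]; exact hcross
  set a := (⟪P v, P v⟫ : ℝ) with ha
  set b := (⟪Q v, Q v⟫ : ℝ) with hb
  have h1 : ⟪P v - α • Q v, P v - α • Q v⟫ = a + α ^ 2 * b := by
    simp [inner_sub_sub_self, inner_smul_left, inner_smul_right, hcross, hcross', -inner_self_eq_norm_sq_to_K,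
      ← ha, ← hb]
    ring
  have h2 : (⟪v, v⟫ : ℝ) = a + b := by
    conv_lhs => rw [hv]
    simp [inner_add_add_self, -inner_self_eq_norm_sq_to_K, hcross, hcross', ← ha, ← hb]
  have h3 : (P v - α • Q v) - v = -((1 + α) • Q v) := by
    nth_rewrite 3 [hv]
    module
  have h4 : ⟪(P v - α • Q v) - v, (P v - α • Q v) - v⟫ = (1 + α) ^ 2 * b := by
    rw [h3]
    simp [inner_smul_left, inner_smul_right, -inner_self_eq_norm_sq_to_K, ← hb]
    ring
  have hα1 : (1 + α) ≠ 0 := by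
    have h0 := hα.1
    linarith
  rw [h1, h2, h4]
  field_simp
  ring
end

section
/- With notation as in Carnot's theorem (v⁺ = (P − αQ)v for orthogonal projectors P, Q with P + Q = Id and restitution α ∈ [0,1]), the kinetic energy does not increase: T(v⁺) ≤ T(v), with equality if α = 1. -/
open RealInnerProductSpace

/-!
STATEMENT 10: With the notation of Carnot's theorem (P, Q complementary
orthogonal projectors, α ∈ [0,1], v⁺ = P v − α Q v, T(w) = ½⟨w,w⟩), the
kinetic energy does not increase: T(v⁺) ≤ T(v), with equality if α = 1.
-/
theorem carnot_energy_nonincreasing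
    {V : Type*} [NormedAddCommGroup V] [InnerProductSpace ℝ V]
    (P Q : V →ₗ[ℝ] V)
    (hPsa : ∀ x y : V, ⟪P x, y⟫ = ⟪x, P y⟫)
    (hQsa : ∀ x y : V, ⟪Q x, y⟫ = ⟪x, Q y⟫)
    (hPidem : P ∘ₗ P = P) (hQidem : Q ∘ₗ Q = Q)
    (hPQ : P ∘ₗ Q = 0) (hQP : Q ∘ₗ P = 0)
    (hsum : P + Q = LinearMap.id)
    (α : ℝ) (hα : α ∈ Set.Icc (0:ℝ) 1) (v : V) :
    (1/2 : ℝ) * ⟪P v - α • Q v, P v - α • Q v⟫ ≤ (1/2 : ℝ) * ⟪v, v⟫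
    ∧ (α = 1 →
        (1/2 : ℝ) * ⟪P v - α • Q v, P v - α • Q v⟫ = (1/2 : ℝ) * ⟪v, v⟫) := by
  have horth : ⟪P v, Q v⟫ = 0 := by
    have : P (Q v) = 0 := by
      have := congrArg (fun f => f v) hPQ
      simpa using this
    rw [hPsa, this, inner_zero_right]
  have hv : v = P v + Q v := by
    have := congrArg (fun f => f v) hsum
    simpa using this.symm
  have hexp : ⟪P v - α • Q v, P v - α • Q v⟫
      = ⟪P v, P v⟫ + α^2 * ⟪Q v, Q v⟫ := by
    have horth' : ⟪Q v, P v⟫ = 0 := by rw [real_inner_comm]; exact horth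
    simp only [inner_sub_sub_self, real_inner_smul_left, real_inner_smul_right,
      horth, horth']
    ring
  have hvexp : ⟪v, v⟫ = ⟪P v, P v⟫ + ⟪Q v, Q v⟫ := by
    conv_lhs => rw [hv]
    have horth' : ⟪Q v, P v⟫ = 0 := by rw [real_inner_comm]; exact horth
    rw [inner_add_add_self, horth, horth']
    ring
  have hQnn : (0:ℝ) ≤ ⟪Q v, Q v⟫ := real_inner_self_nonneg
  obtain ⟨h0, h1⟩ := hα
  constructor
  · rw [hexp, hvexp]
    have : α^2 ≤ 1 := by nlinarith
    nlinarith
  · intro hα1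
    rw [hexp, hvexp, hα1]
    ring
end
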